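/- Let ρ = β + iγ be a zero of the Riemann zeta function with 1/2 < β < 1 and γ sufficiently large. Suppose |ζ(1 + iγ)| ≥ c₀ (log γ)^{-2/3} (log log γ)^{-1/3} for some c₀ > 0, and let M₁ = max over σ ≥ 1/2, |t| ≤ 1/2 of log|ζ(σ + iγ + it)|. If m denotes the multiplicity of ρ as a zero of ζ, then m · log(1/(2 - 2β)) ≤ M₁ + (2/3) log log γ + (1/3) log log log γ - log c₀. -/

import Mathlib

open Complex

theorem multiplicity_bound_near_one
    (β γ c₀ M₁ : ℝ) (hβ1 : 1 / 2 < β) (hβ2 : β < 1)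
    (hγ : Real.exp (Real.exp 1) < γ) (hc₀ : 0 < c₀)
    (hζ1 : c₀ * (Real.log γ) ^ (-(2 : ℝ) / 3) *
        (Real.log (Real.log γ)) ^ (-(1 : ℝ) / 3) ≤
      ‖riemannZeta (1 + γ * I)‖)
    (hM₁ : ∀ σ t : ℝ, 1 / 2 ≤ σ → |t| ≤ 1 / 2 →
      Real.log (‖riemannZeta (↑σ + (↑γ + ↑t) * I)‖) ≤ M₁)
    (m : ℕ) (hm : 1 ≤ m)
    (g : ℂ → ℂ) (hg : AnalyticAt ℂ g (↑β + ↑γ * I)) (hg0 : g (↑β + ↑γ * I) ≠ 0)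
    (hfg : ∀ᶠ z in nhds ((β : ℂ) + γ * I),
      riemannZeta z = (z - (↑β + ↑γ * I)) ^ m * g z) :
    (m : ℝ) * Real.log (1 / (2 - 2 * β)) ≤
      M₁ + (2 / 3) * Real.log (Real.log γ) +
        (1 / 3) * Real.log (Real.log (Real.log γ)) - Real.log c₀ := by
  set ρ : ℂ := (β : ℂ) + γ * I with hρdef
  set c : ℂ := 1 + γ * I with hcdef
  -- basic real facts
  have he1 : (1 : ℝ) < Real.exp 1 := by
    have := Real.add_one_le_exp 1; linarith
  have hγ1 : (1 : ℝ) < γ := by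
    have : Real.exp 1 < Real.exp (Real.exp 1) := Real.exp_lt_exp.mpr he1
    linarith
  have hγ0 : (0 : ℝ) < γ := by linarith
  have hlogγ : Real.exp 1 < Real.log γ :=
    (Real.lt_log_iff_exp_lt hγ0).mpr hγ
  have hL2 : (1 : ℝ) < Real.log γ := lt_trans he1 hlogγ
  have hL2' : (0 : ℝ) < Real.log γ := by linarith
  have hL3 : (1 : ℝ) < Real.log (Real.log γ) := by
    calc (1 : ℝ) = Real.log (Real.exp 1) := (Real.log_exp 1).symm
    _ < Real.log (Real.log γ) := Real.log_lt_log (Real.exp_pos 1) hlogγ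
  have hL3' : (0 : ℝ) < Real.log (Real.log γ) := by linarith
  -- positivity of the lower bound and of |ζ(c)|
  have hprod : (0 : ℝ) < c₀ * (Real.log γ) ^ (-(2 : ℝ) / 3) *
      (Real.log (Real.log γ)) ^ (-(1 : ℝ) / 3) :=
    mul_pos (mul_pos hc₀ (Real.rpow_pos_of_pos hL2' _)) (Real.rpow_pos_of_pos hL3' _)
  have hζc : (0 : ℝ) < ‖riemannZeta c‖ := lt_of_lt_of_le hprod hζ1
  -- D = 2 - 2β
  set D : ℝ := 2 - 2 * β with hDdef
  have hD0 : 0 < D := by simp [hDdef]; linarith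
  have hD1 : D < 1 := by simp [hDdef]; linarith
  -- ρ - c and c - ρ
  have hρc : ρ - c = ((β - 1 : ℝ) : ℂ) := by rw [hρdef, hcdef]; push_cast; ring
  have hcρ : c - ρ = ((1 - β : ℝ) : ℂ) := by rw [hρdef, hcdef]; push_cast; ring
  have hcρabs : ‖c - ρ‖ = 1 - β := by
    rw [hcρ, Complex.norm_real, Real.norm_eq_abs, abs_of_pos (by linarith)]
  have hcne : c ≠ ρ := by
    intro h
    have : ‖c - ρ‖ = 0 := by simp [h]
    rw [hcρabs] at this; linarith
  -- the auxiliary functions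
  set Φ : ℂ → ℂ := fun z => if z = ρ then g ρ else riemannZeta z / (z - ρ) ^ m with hΦdef
  set P : ℂ → ℂ := fun z => (2 * (1 / 4 - (z - c) * ((β : ℂ) - 1))) ^ m with hPdef
  set F : ℂ → ℂ := fun z => Φ z * P z with hFdef
  have hPdiff : Differentiable ℂ P := by
    apply Differentiable.pow
    apply Differentiable.const_mul
    exact (differentiable_const _).sub ((differentiable_id.sub_const c).mul_const _)
  -- Φ is differentiable on the closed ball
  have hΦdiff : ∀ z ∈ Metric.closedBall c (1 / 2), DifferentiableAt ℂ Φ z := by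
    intro z hz
    by_cases hzρ : z = ρ
    · subst hzρ
      have heq : Φ =ᶠ[nhds ρ] g := by
        filter_upwards [hfg] with w hw
        by_cases h : w = ρ
        · simp [hΦdef, h]
        · simp only [hΦdef, if_neg h, hw]
          rw [mul_comm, mul_div_assoc, div_self (pow_ne_zero _ (sub_ne_zero.mpr h)), mul_one]
      exact hg.differentiableAt.congr_of_eventuallyEq heq
    · have h1 : z ≠ 1 := by
        intro h
        have him : |z.im - γ| ≤ 1 / 2 := by
          have h2 : ‖z - c‖ ≤ 1 / 2 := by
            simpa [Complex.dist_eq] using Metric.mem_closedBall.mp hz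
          have h3 : |(z - c).im| ≤ ‖z - c‖ := Complex.abs_im_le_norm _
          have h4 : (z - c).im = z.im - γ := by simp [hcdef]
          rw [h4] at h3; linarith
        rw [h] at him
        simp only [Complex.one_im, zero_sub, abs_neg, abs_of_pos hγ0] at him
        linarith
      have hd : DifferentiableAt ℂ (fun w => riemannZeta w / (w - ρ) ^ m) z :=
        (differentiableAt_riemannZeta h1).div
          ((differentiableAt_id.sub_const ρ).pow m) (pow_ne_zero m (sub_ne_zero.mpr hzρ))
      refine hd.congr_of_eventuallyEq ?_
      filter_upwards [eventually_ne_nhds hzρ] with w hw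
      simp [hΦdef, if_neg hw]
  have hFdiff : ∀ z ∈ Metric.closedBall c (1 / 2), DifferentiableAt ℂ F z :=
    fun z hz => (hΦdiff z hz).mul (hPdiff z)
  -- maximum modulus principle setup
  have hcl : closure (Metric.ball c (1 / 2)) = Metric.closedBall c (1 / 2) :=
    closure_ball c (by norm_num)
  have hdc : DiffContOnCl ℂ F (Metric.ball c (1 / 2)) := by
    apply DifferentiableOn.diffContOnCl
    rw [hcl]
    exact fun z hz => (hFdiff z hz).differentiableWithinAt
  -- boundary bound
  have hfr : frontier (Metric.ball c (1 / 2)) = Metric.sphere c (1 / 2) :=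
    frontier_ball c (by norm_num)
  have hbound : ∀ z ∈ frontier (Metric.ball c (1 / 2)), ‖F z‖ ≤ Real.exp M₁ := by
    rw [hfr]
    intro z hz
    have hznorm : ‖z - c‖ = 1 / 2 := by
      simpa [Complex.dist_eq] using Metric.mem_sphere.mp hz
    have hzρ : z ≠ ρ := by
      intro h
      rw [h, hρc, Complex.norm_real, Real.norm_eq_abs, abs_of_nonpos (by linarith)] at hznorm
      linarith
    -- |P z| = |z - ρ|^m
    have hPkey : (1 / 4 - (z - c) * ((β : ℂ) - 1)) = (z - c) * (starRingEnd ℂ) (z - ρ) := by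
      have h14 : (z - c) * (starRingEnd ℂ) (z - c) = (1 / 4 : ℂ) := by
        rw [Complex.mul_conj]
        rw [Complex.normSq_eq_norm_sq, hznorm]
        norm_num
      have hconj : (starRingEnd ℂ) (z - ρ) = (starRingEnd ℂ) (z - c) - ((β : ℂ) - 1) := by
        have : z - ρ = (z - c) - ((β - 1 : ℝ) : ℂ) := by rw [← hρc]; ring
        rw [this, map_sub, Complex.conj_ofReal]
        push_cast; ring
      rw [hconj, ← h14]; ring
    have hPabs : ‖P z‖ = ‖z - ρ‖ ^ m := by
      have hkey2 : ‖2 * (1 / 4 - (z - c) * ((β : ℂ) - 1))‖ =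
          ‖z - ρ‖ := by
        rw [hPkey, norm_mul, norm_mul, hznorm, Complex.norm_conj, Complex.norm_two]
        ring
      simp only [hPdef, norm_pow, hkey2]
    -- |F z| = |ζ z|
    have hFabs : ‖F z‖ = ‖riemannZeta z‖ := by
      simp only [hFdef, hΦdef, if_neg hzρ, norm_mul, norm_div, norm_pow, hPabs]
      have hne : ‖z - ρ‖ ^ m ≠ 0 :=
        pow_ne_zero _ (norm_ne_zero_iff.mpr (sub_ne_zero.mpr hzρ))
      field_simp
    -- |ζ z| ≤ exp M₁
    have hre : 1 / 2 ≤ z.re := by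
      have h3 : |(z - c).re| ≤ ‖z - c‖ := Complex.abs_re_le_norm _
      have h4 : (z - c).re = z.re - 1 := by simp [hcdef]
      rw [h4, hznorm, abs_le] at h3; linarith [h3.1]
    have him : |z.im - γ| ≤ 1 / 2 := by
      have h3 : |(z - c).im| ≤ ‖z - c‖ := Complex.abs_im_le_norm _
      have h4 : (z - c).im = z.im - γ := by simp [hcdef]
      rw [h4, hznorm] at h3; exact h3
    have hz' : ((z.re : ℂ) + ((γ : ℂ) + ((z.im - γ : ℝ) : ℂ)) * I) = z := by
      have : ((γ : ℂ) + ((z.im - γ : ℝ) : ℂ)) = (z.im : ℂ) := by push_cast; ring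
      rw [this, Complex.re_add_im]
    have hlog := hM₁ z.re (z.im - γ) hre him
    rw [hz'] at hlog
    rw [show ‖F z‖ = ‖F z‖ from rfl, hFabs]
    rcases eq_or_lt_of_le (norm_nonneg (riemannZeta z)) with h0 | h0
    · rw [← h0]; positivity
    · exact (Real.log_le_iff_le_exp h0).mp hlog
  -- apply maximum modulus at the center
  have hcmem : c ∈ closure (Metric.ball c (1 / 2)) := by
    rw [hcl]; exact Metric.mem_closedBall_self (by norm_num)
  have hmax : ‖F c‖ ≤ Real.exp M₁ :=
    Complex.norm_le_of_forall_mem_frontier_norm_le Metric.isBounded_ball hdc hbound hcmem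
  -- compute |F c|
  have h1β : ((1 - β : ℝ) : ℂ) ≠ 0 := by
    rw [Complex.ofReal_ne_zero]; intro h; linarith
  have hFc : F c * ((D : ℝ) : ℂ) ^ m = riemannZeta c := by
    simp only [hFdef, hΦdef, if_neg hcne, hPdef, hcρ]
    have h2 : ((2 : ℂ) * (1 / 4 - (c - c) * ((β : ℂ) - 1))) = 1 / 2 := by ring
    rw [h2, mul_assoc, ← mul_pow]
    have h3 : ((1 : ℂ) / 2 * ((D : ℝ) : ℂ)) = ((1 - β : ℝ) : ℂ) := by
      rw [hDdef]; push_cast; ring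
    rw [h3, div_mul_cancel₀ _ (pow_ne_zero _ h1β)]
  -- hence |ζ c| ≤ exp M₁ * D^m
  have hkey : ‖riemannZeta c‖ ≤ Real.exp M₁ * D ^ m := by
    have habs : ‖riemannZeta c‖ = ‖F c‖ * D ^ m := by
      rw [← hFc, norm_mul, norm_pow, Complex.norm_real, Real.norm_eq_abs, abs_of_pos hD0]
    rw [habs]
    exact mul_le_mul_of_nonneg_right hmax (by positivity)
  -- take logs
  have hloghi : Real.log (‖riemannZeta c‖) ≤ M₁ + (m : ℝ) * Real.log D := by
    calc Real.log (‖riemannZeta c‖) ≤ Real.log (Real.exp M₁ * D ^ m) :=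
          Real.log_le_log hζc hkey
    _ = M₁ + (m : ℝ) * Real.log D := by
          rw [Real.log_mul (Real.exp_ne_zero _) (by positivity), Real.log_exp, Real.log_pow]
  -- lower bound on log |ζ c|
  have hloglo : Real.log c₀ + (-(2 : ℝ) / 3) * Real.log (Real.log γ) +
      (-(1 : ℝ) / 3) * Real.log (Real.log (Real.log γ)) ≤
      Real.log (‖riemannZeta c‖) := by
    have h := Real.log_le_log hprod hζ1
    rw [Real.log_mul (by positivity) (by positivity),
        Real.log_mul (by positivity) (by positivity),
        Real.log_rpow hL2', Real.log_rpow hL3'] at h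
    linarith
  -- finish
  rw [one_div, Real.log_inv]
  have : Real.log D = Real.log D := rfl
  nlinarith [hloghi, hloglo]
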